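/- For n ≥ 2, the only simplicial complex over I_n = {0, ..., n−1} (up to containing it) that generates the language ND_n of non-decreasing binary sequences is the full complex: any complex generating ND_n must contain the simplex I_n. Equivalently, for any f : B^J → {0,1}^n with image ND_n, the intersection ⋂_{i<n} W_f(i) is nonempty. -/

import Mathlib

/-- `W` determines output coordinate `i` of `f`: the value `f x i` only
depends on the restriction of `x` to `W`. -/
def Determines {B J A I : Type*} (f : (J → B) → (I → A)) (i : I) (W : Set J) : Prop :=
  ∀ x y : J → B, (∀ j ∈ W, x j = y j) → f x i = f y i

/-- The input window of output coordinate `i`: the intersection of all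
determining sets (which, for finite data, is the smallest determining set). -/
def window {B J A I : Type*} (f : (J → B) → (I → A)) (i : I) : Set J :=
  ⋂₀ {W : Set J | Determines f i W}

/-- The dual window of an input coordinate `j`. -/
def dualWindow {B J A I : Type*} (f : (J → B) → (I → A)) (j : J) : Set I :=
  {i : I | j ∈ window f i}

/-- The communication complex of `f`: `S ∈ K_f` iff `⋂_{i ∈ S} W_f(i) ≠ ∅`
(the empty intersection being all of `J`). -/
def commComplex {B J A I : Type*} (f : (J → B) → (I → A)) : Set (Set I) :=
  {S : Set I | (⋂ i ∈ S, window f i).Nonempty}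

/-- A complex `K` over `I` generates the language `L ⊆ A^I` if some function
`f : B^J → A^I` (with `B, J` finite, `J` nonempty) has image `L` and
communication complex contained in `K`. -/
def Generates {A I : Type*} (K : Set (Set I)) (L : Set (I → A)) : Prop :=
  ∃ (B J : Type) (_ : Finite B) (_ : Finite J) (_ : Nonempty J)
    (f : (J → B) → (I → A)), Set.range f = L ∧ commComplex f ⊆ K

/-- A complex is connected if no nontrivial partition of the vertex set splits
all of its simplices. -/
def ConnectedComplex {I : Type*} (K : Set (Set I)) : Prop :=
  ¬ ∃ I0 : Set I, I0 ≠ ∅ ∧ I0 ≠ Set.univ ∧ ∀ S ∈ K, S ⊆ I0 ∨ S ⊆ I0ᶜ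

/-- A simplicial complex: a downward closed collection of subsets. -/
def IsComplex {I : Type*} (K : Set (Set I)) : Prop :=
  ∀ S ∈ K, ∀ T ⊆ S, T ∈ K

/-- The 1-skeleton of a complex, as a simple graph. -/
def skeletonGraph {I : Type*} (K : Set (Set I)) : SimpleGraph I :=
  SimpleGraph.fromRel (fun i j => ({i, j} : Set I) ∈ K)

/-- The complex associated to a graph: the empty set, the singletons, and the
edges. -/
def treeComplex {I : Type*} (G : SimpleGraph I) : Set (Set I) :=
  {S | S = ∅ ∨ (∃ i, S = {i}) ∨ ∃ i j, G.Adj i j ∧ S = ({i, j} : Set I)}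

/-- The maximal simplices of a complex. -/
def maxSimplices {I : Type*} (K : Set (Set I)) : Set (Set I) :=
  {S | S ∈ K ∧ ∀ T ∈ K, S ⊆ T → S = T}

/-- The image `f_*(K)` of a complex `K` on the input coordinates of `f`:
generated by the unions of dual windows over simplices of `K`. -/
def pushComplex {B J A I : Type*} (f : (J → B) → (I → A)) (K : Set (Set J)) : Set (Set I) :=
  {T : Set I | ∃ S ∈ K, T ⊆ ⋃ j ∈ S, dualWindow f j}


section Aux

lemma det_mono {B J A I : Type*} (f : (J → B) → (I → A)) (i : I) {W W' : Set J}
    (h : W ⊆ W') (hd : Determines f i W) : Determines f i W' :=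
  fun x y hxy => hd x y fun j hj => hxy j (h hj)

/-- Extend a function on `{k // k ≠ j}` to `J` by assigning `bb` at `j`. -/
def extAt {B J : Type*} [DecidableEq J] (j : J) (bb : B) (u : {k : J // k ≠ j} → B) :
    J → B :=
  fun k => if h : k = j then bb else u ⟨k, h⟩

lemma extAt_restrict {B J : Type*} [DecidableEq J] (j : J) (x : J → B) :
    extAt j (x j) (fun k => x k.1) = x := by
  funext k
  by_cases h : k = j
  · subst h; simp [extAt]
  · simp [extAt, h]

lemma extAt_agree {B J : Type*} [DecidableEq J] (j : J) (b1 b2 : B)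
    (u : {k : J // k ≠ j} → B) : ∀ k, k ≠ j → extAt j b1 u k = extAt j b2 u k := by
  intro k hk
  simp [extAt, hk]

/-- Lifting a point of a window of a sliced function back to a window of `g`. -/
lemma window_lift {B J I : Type*} [DecidableEq J] (g : (J → B) → I → Bool) (j : J)
    (c : I → B) (i : I) (w : {k : J // k ≠ j})
    (hw : w ∈ window (fun u i => g (extAt j (c i) u) i) i) :
    (w : J) ∈ window g i := by
  rw [window, Set.mem_sInter]
  intro W hW
  have hW' : Determines (fun u i => g (extAt j (c i) u) i) i
      {u : {k : J // k ≠ j} | (u : J) ∈ W} := by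
    intro u v huv
    dsimp only
    apply hW
    intro k hk
    by_cases h : k = j
    · simp [extAt, h]
    · simp only [extAt, dif_neg h]
      exact huv ⟨k, h⟩ hk
  exact Set.mem_sInter.mp hw {u : {k : J // k ≠ j} | (u : J) ∈ W} hW'

lemma key_empty {B J : Type*} (hJ : IsEmpty J) {n : ℕ} (h0 : 0 < n) (hl : n - 1 < n)
    (g : (J → B) → Fin n → Bool) (hmono : ∀ x, Monotone (g x))
    (hx : ∃ x, g x ⟨0, h0⟩ = true) (hy : ∃ y, g y ⟨n - 1, hl⟩ = false) : False := by
  obtain ⟨x, hx⟩ := hx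
  obtain ⟨y, hy⟩ := hy
  have hxy : x = y := funext fun k => hJ.elim k
  have hle : (⟨0, h0⟩ : Fin n) ≤ ⟨n - 1, hl⟩ := Fin.mk_le_mk.mpr (Nat.zero_le _)
  have hmle := hmono x hle
  rw [hx, hxy, hy] at hmle
  exact absurd hmle (by simp)

/-- Key induction: if all values of `g` are monotone chains, the first event is
nonempty and the last is not everything, then all windows intersect. -/
lemma key (B : Type) (n : ℕ) (hn : 0 < n) (hl : n - 1 < n) :
    ∀ (m : ℕ) (J : Type) (_ : Finite J), Nat.card J ≤ m →
    ∀ g : (J → B) → Fin n → Bool,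
      (∀ x, Monotone (g x)) →
      (∃ x, g x ⟨0, hn⟩ = true) →
      (∃ y, g y ⟨n - 1, hl⟩ = false) →
      (⋂ i, window g i).Nonempty := by
  intro m
  induction m with
  | zero =>
    intro J _ hcard g hmono hx hy
    have hJ : IsEmpty J := by
      by_contra h
      rw [not_isEmpty_iff] at h
      have := Nat.card_pos (α := J)
      omega
    exact absurd (key_empty hJ hn hl g hmono hx hy) not_false
  | succ m ih =>
    intro J _ hcard g hmono hx hy
    rcases isEmpty_or_nonempty J with hJ | hJ
    · exact absurd (key_empty hJ hn hl g hmono hx hy) not_false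
    classical
    obtain ⟨j⟩ := hJ
    by_cases hall : ∀ i, j ∈ window g i
    · exact ⟨j, Set.mem_iInter.mpr hall⟩
    push_neg at hall
    obtain ⟨i₀, hi₀⟩ := hall
    -- the coordinate j is irrelevant for output i₀
    have hdet : Determines g i₀ {k : J | k ≠ j} := by
      rw [window, Set.mem_sInter] at hi₀
      push_neg at hi₀
      obtain ⟨W, hW, hjW⟩ := hi₀
      exact det_mono g i₀ (fun k hk => by rintro rfl; exact hjW hk) hW
    -- cardinality decreases
    have hcard' : Nat.card {k : J // k ≠ j} ≤ m := by
      haveI : Fintype J := Fintype.ofFinite J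
      have h1 : Fintype.card {k : J // k ≠ j} < Fintype.card J :=
        Fintype.card_subtype_lt (x := j) (by simp)
      rw [Nat.card_eq_fintype_card] at hcard ⊢
      omega
    obtain ⟨x, hx⟩ := hx
    obtain ⟨y, hy⟩ := hy
    set b := x j with hb
    set b' := y j with hb'
    have hex : extAt j b (fun k => x k.1) = x := extAt_restrict j x
    have hey : extAt j b' (fun k => y k.1) = y := extAt_restrict j y
    by_cases hA : ∃ u, g (extAt j b u) ⟨n - 1, hl⟩ = false
    · -- slice at b works
      obtain ⟨u₀, hu₀⟩ := hA
      have hres := ih {k : J // k ≠ j} inferInstance hcard'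
        (fun u i => g (extAt j ((fun _ : Fin n => b) i) u) i)
        (fun u => hmono _)
        ⟨fun k => x k.1, by dsimp only; rw [hex]; exact hx⟩
        ⟨u₀, hu₀⟩
      obtain ⟨w, hw⟩ := hres
      exact ⟨(w : J), Set.mem_iInter.mpr fun i =>
        window_lift g j (fun _ => b) i w (Set.mem_iInter.mp hw i)⟩
    · -- splice the b-slice below i₀ with the b'-slice above i₀
      have hA' : ∀ u, g (extAt j b u) ⟨n - 1, hl⟩ = true := by
        intro u
        cases hbu : g (extAt j b u) ⟨n - 1, hl⟩
        · exact absurd ⟨u, hbu⟩ hA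
        · rfl
      set c : Fin n → B := fun i => if i ≤ i₀ then b else b' with hc
      -- i₀ is not the last index
      have hi₀ne : i₀ ≠ ⟨n - 1, hl⟩ := by
        intro hcontra
        have h1 : g (extAt j b (fun k => y k.1)) i₀ = g (extAt j b' (fun k => y k.1)) i₀ :=
          hdet _ _ (extAt_agree j b b' _)
        rw [hcontra] at h1
        rw [hA' (fun k => y k.1), hey, hy] at h1
        exact absurd h1 (by simp)
      have hclast : c ⟨n - 1, hl⟩ = b' := by
        have : ¬ ((⟨n - 1, hl⟩ : Fin n) ≤ i₀) := by
          intro hle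
          exact hi₀ne (le_antisymm (Fin.mk_le_mk.mpr (by omega)) hle)
        simp [hc, this]
      have hcfirst : c ⟨0, hn⟩ = b := by
        simp [hc, Fin.mk_le_mk.mpr (Nat.zero_le _)]
      -- monotonicity of the spliced function
      have hmono' : ∀ u : {k : J // k ≠ j} → B,
          Monotone (fun i => g (extAt j (c i) u) i) := by
        intro u i i' hii'
        dsimp only
        by_cases h1 : i' ≤ i₀
        · have h2 : i ≤ i₀ := le_trans hii' h1
          simp only [hc, if_pos h1, if_pos h2]
          exact hmono _ hii'
        · by_cases h2 : i ≤ i₀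
          · simp only [hc, if_pos h2, if_neg h1]
            calc g (extAt j b u) i ≤ g (extAt j b u) i₀ := hmono _ h2
              _ = g (extAt j b' u) i₀ := hdet _ _ (extAt_agree j b b' u)
              _ ≤ g (extAt j b' u) i' := hmono _ (le_of_lt (lt_of_not_ge h1))
          · simp only [hc, if_neg h1, if_neg h2]
            exact hmono _ hii'
      have hres := ih {k : J // k ≠ j} inferInstance hcard'
        (fun u i => g (extAt j (c i) u) i)
        hmono'
        ⟨fun k => x k.1, by rw [hcfirst, hex]; exact hx⟩
        ⟨fun k => y k.1, by rw [hclast, hey]; exact hy⟩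
      obtain ⟨w, hw⟩ := hres
      exact ⟨(w : J), Set.mem_iInter.mpr fun i =>
        window_lift g j c i w (Set.mem_iInter.mp hw i)⟩

end Aux

/-- any complex generating the non-decreasing binary sequences
of length `n ≥ 2` contains the full simplex; equivalently, for any `f`
generating them, the intersection of all input windows is nonempty. -/
theorem stmt14 (n : ℕ) (hn : 2 ≤ n) :
    (∀ K : Set (Set (Fin n)),
      Generates K {x : Fin n → Bool | Monotone x} → Set.univ ∈ K) ∧
    (∀ (B J : Type) (_ : Finite B) (_ : Finite J) (_ : Nonempty J)
      (f : (J → B) → (Fin n → Bool)),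
        Set.range f = {x : Fin n → Bool | Monotone x} →
        (⋂ i : Fin n, window f i).Nonempty) := by
  have hn0 : 0 < n := by omega
  have hnl : n - 1 < n := by omega
  have part2 : ∀ (B J : Type) (_ : Finite B) (_ : Finite J) (_ : Nonempty J)
      (f : (J → B) → (Fin n → Bool)),
        Set.range f = {x : Fin n → Bool | Monotone x} →
        (⋂ i : Fin n, window f i).Nonempty := by
    intro B J hB hJfin hJne f hrange
    have hmono : ∀ x, Monotone (f x) := by
      intro x
      have hmem : f x ∈ Set.range f := ⟨x, rfl⟩
      rw [hrange] at hmem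
      exact hmem
    have hx : ∃ x, f x ⟨0, hn0⟩ = true := by
      have htrue : (fun _ : Fin n => true) ∈ Set.range f := by
        rw [hrange]; exact monotone_const
      obtain ⟨x, hx⟩ := htrue
      exact ⟨x, by rw [hx]⟩
    have hy : ∃ y, f y ⟨n - 1, hnl⟩ = false := by
      have hfalse : (fun _ : Fin n => false) ∈ Set.range f := by
        rw [hrange]; exact monotone_const
      obtain ⟨y, hy⟩ := hfalse
      exact ⟨y, by rw [hy]⟩
    exact key B n hn0 hnl (Nat.card J) J hJfin le_rfl f hmono hx hy
  constructor
  · rintro K ⟨B, J, hB, hJfin, hJne, f, hrange, hsub⟩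
    apply hsub
    show (⋂ i ∈ (Set.univ : Set (Fin n)), window f i).Nonempty
    rw [Set.biInter_univ]
    exact part2 B J hB hJfin hJne f hrange
  · exact part2
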